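/- For every natural number n ≥ 1, the set WAM1 of the cylinder, A_n = {(r_i cos θ_j, r_i sin θ_j, z_k)} with radii r_i = cos(iπ/n) for 0 ≤ i ≤ n, angles θ_j = jπ/(n+2) for 0 ≤ j ≤ n+1 when n is even and θ_j = jπ/(n+1) for 0 ≤ j ≤ n when n is odd, and heights z_k = cos(kπ/n) for 0 ≤ k ≤ n, has cardinality exactly (n+1)³ (as a set of distinct points of ℝ³), both for n even and for n odd. -/

import Mathlib

open Real Finset

private lemma theta_mem {m j : ℕ} (hm : 1 ≤ m) (hj : j ≤ m) :
    (j : ℝ) * π / m ∈ Set.Icc 0 π := by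
  have hm0 : (0:ℝ) < m := by exact_mod_cast hm
  constructor
  · positivity
  · rw [div_le_iff₀ hm0]
    have : (j:ℝ) ≤ m := by exact_mod_cast hj
    nlinarith [pi_pos]

private lemma theta_lt {m j : ℕ} (hj : j < m) : (j : ℝ) * π / m < π := by
  have hm0 : (0:ℝ) < m := by
    have : 0 < m := Nat.pos_of_ne_zero (by omega)
    exact_mod_cast this
  rw [div_lt_iff₀ hm0]
  have : (j:ℝ) < m := by exact_mod_cast hj
  nlinarith [pi_pos]

private lemma grid_cast_inj {m a b : ℕ} (hm : 1 ≤ m)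
    (h : (a : ℝ) * π / m = (b : ℝ) * π / m) : a = b := by
  have hm0 : (m:ℝ) ≠ 0 := by positivity
  field_simp at h
  exact_mod_cast h

private lemma cos_grid_inj {m a b : ℕ} (hm : 1 ≤ m) (ha : a ≤ m) (hb : b ≤ m)
    (h : Real.cos ((a:ℝ) * π / m) = Real.cos ((b:ℝ) * π / m)) : a = b :=
  grid_cast_inj hm (Real.injOn_cos (theta_mem hm ha) (theta_mem hm hb) h)

private lemma sin_grid_zero {m j : ℕ} (hm : 1 ≤ m) (hj : j < m)
    (h : Real.sin ((j:ℝ) * π / m) = 0) : j = 0 := by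
  by_contra hj0
  have hm0 : (0:ℝ) < m := by exact_mod_cast hm
  have hpos : 0 < (j:ℝ) * π / m := by
    have : (1:ℝ) ≤ j := by exact_mod_cast Nat.one_le_iff_ne_zero.mpr hj0
    have := pi_pos
    positivity
  exact absurd h (ne_of_gt (Real.sin_pos_of_pos_of_lt_pi hpos (theta_lt hj)))

private lemma cos_grid_eq_zero_iff {n i : ℕ} (hn : 1 ≤ n) (hi : i ≤ n) :
    Real.cos ((i:ℝ) * π / n) = 0 ↔ 2 * i = n := by
  have hn0 : (0:ℝ) < n := by exact_mod_cast hn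
  constructor
  · intro h
    have hhalf : (π/2 : ℝ) ∈ Set.Icc 0 π := ⟨by positivity, by linarith [pi_pos]⟩
    have heq := Real.injOn_cos (theta_mem hn hi) hhalf (by rw [h, Real.cos_pi_div_two])
    field_simp at heq
    have h2 : (2 * (i:ℝ) - n) * π = 0 := by rw [show (2 * (i:ℝ) - n) = 0 by linarith]; ring
    have h3 : (2 * (i:ℝ) - n) = 0 := (mul_eq_zero.mp h2).resolve_right pi_ne_zero
    have : (2 * (i:ℝ)) = n := by linarith
    exact_mod_cast this
  · intro h
    have h' : (i:ℝ) * π / n = π / 2 := by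
      have hni : (n:ℝ) = 2 * i := by exact_mod_cast h.symm
      rw [hni]
      have hi0 : (0:ℝ) < i := by
        rcases Nat.eq_zero_or_pos i with rfl | hp
        · simp at h; omega
        · exact_mod_cast hp
      field_simp
    rw [h', Real.cos_pi_div_two]

private lemma plane_inj {m : ℕ} {r r' : ℝ} {j j' : ℕ} (hj : j < m) (hj' : j' < m)
    (hr : r ≠ 0 ∨ j = 0) (hr' : r' ≠ 0 ∨ j' = 0)
    (h1 : r * Real.cos ((j:ℝ) * π / m) = r' * Real.cos ((j':ℝ) * π / m))
    (h2 : r * Real.sin ((j:ℝ) * π / m) = r' * Real.sin ((j':ℝ) * π / m)) :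
    r = r' ∧ j = j' := by
  have hm : 1 ≤ m := by omega
  have hsq : r ^ 2 = r' ^ 2 := by
    calc r ^ 2 = (r * Real.sin ((j:ℝ) * π / m))^2 + (r * Real.cos ((j:ℝ) * π / m))^2 := by
          rw [mul_pow, mul_pow, ← mul_add, sin_sq_add_cos_sq, mul_one]
      _ = (r' * Real.sin ((j':ℝ) * π / m))^2 + (r' * Real.cos ((j':ℝ) * π / m))^2 := by
          rw [h1, h2]
      _ = r' ^ 2 := by rw [mul_pow, mul_pow, ← mul_add, sin_sq_add_cos_sq, mul_one]
  by_cases hr0 : r = 0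
  · have hr'0 : r' = 0 := by nlinarith
    have hj0 : j = 0 := hr.resolve_left (by simp [hr0])
    have hj'0 : j' = 0 := hr'.resolve_left (by simp [hr'0])
    exact ⟨by rw [hr0, hr'0], by rw [hj0, hj'0]⟩
  · have hr'0 : r' ≠ 0 := by
      intro h; rw [h] at hsq; exact hr0 (by nlinarith)
    have hcases : (r - r') * (r + r') = 0 := by nlinarith
    rcases mul_eq_zero.mp hcases with h | h
    · have hrr : r = r' := by linarith
      have hcos : Real.cos ((j:ℝ) * π / m) = Real.cos ((j':ℝ) * π / m) := by
        rw [hrr] at h1; exact mul_left_cancel₀ hr'0 h1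
      exact ⟨hrr, cos_grid_inj hm hj.le hj'.le hcos⟩
    · exfalso
      have hrr : r = -r' := by linarith
      have hsum : r' * (Real.sin ((j:ℝ) * π / m) + Real.sin ((j':ℝ) * π / m)) = 0 := by
        rw [hrr] at h2; ring_nf; ring_nf at h2; linarith
      have hsum' : Real.sin ((j:ℝ) * π / m) + Real.sin ((j':ℝ) * π / m) = 0 :=
        (mul_eq_zero.mp hsum).resolve_left hr'0
      have hs1 : 0 ≤ Real.sin ((j:ℝ) * π / m) := Real.sin_nonneg_of_mem_Icc (theta_mem hm hj.le)
      have hs2 : 0 ≤ Real.sin ((j':ℝ) * π / m) := Real.sin_nonneg_of_mem_Icc (theta_mem hm hj'.le)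
      have hj0 : j = 0 := sin_grid_zero hm hj (by linarith)
      have hj'0 : j' = 0 := sin_grid_zero hm hj' (by linarith)
      have e : Real.cos ((j:ℝ) * π / m) = 1 := by rw [hj0]; simp
      have e' : Real.cos ((j':ℝ) * π / m) = 1 := by rw [hj'0]; simp
      rw [e, e', mul_one, mul_one] at h1
      exact hr'0 (by linarith)




/-- The mesh WAM1 of degree `n` of the rectangular cylinder `D × [-1,1]`:
points `(r_i cos θ_j, r_i sin θ_j, z_k)` with `r_i = cos(iπ/n)`, `0 ≤ i ≤ n`;
`θ_j = jπ/(n+2)`, `0 ≤ j ≤ n+1` when `n` is even and `θ_j = jπ/(n+1)`, `0 ≤ j ≤ n`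
when `n` is odd; `z_k = cos(kπ/n)`, `0 ≤ k ≤ n`. -/
noncomputable def WAM1 (n : ℕ) : Finset (ℝ × ℝ × ℝ) :=
  (Finset.range (n + 1) ×ˢ
      Finset.range (if Even n then n + 2 else n + 1) ×ˢ Finset.range (n + 1)).image
    (fun ijk : ℕ × ℕ × ℕ =>
      let θ : ℝ := if Even n then ijk.2.1 * Real.pi / (n + 2)
        else ijk.2.1 * Real.pi / (n + 1)
      (Real.cos (ijk.1 * Real.pi / n) * Real.cos θ,
        Real.cos (ijk.1 * Real.pi / n) * Real.sin θ,
        Real.cos (ijk.2.2 * Real.pi / n)))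

private lemma odd_card {n : ℕ} (hn : 1 ≤ n) (ho : Odd n) :
    ((Finset.range (n+1) ×ˢ Finset.range (n+1) ×ˢ Finset.range (n+1)).image
      (fun ijk : ℕ × ℕ × ℕ =>
        (Real.cos (ijk.1 * π / n) * Real.cos (ijk.2.1 * π / (n+1)),
         Real.cos (ijk.1 * π / n) * Real.sin (ijk.2.1 * π / (n+1)),
         Real.cos (ijk.2.2 * π / n)))).card = (n+1)^3 := by
  rw [Finset.card_image_of_injOn, Finset.card_product, Finset.card_product,
    Finset.card_range]
  · ring
  intro p hp q hq hfe
  simp only [Finset.mem_coe, Finset.mem_product, Finset.mem_range] at hp hq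
  obtain ⟨hp1, hp2, hp3⟩ := hp
  obtain ⟨hq1, hq2, hq3⟩ := hq
  simp only [Prod.mk.injEq] at hfe
  obtain ⟨e1, e2, e3⟩ := hfe
  have hrne : ∀ i : ℕ, i < n+1 → Real.cos ((i:ℝ) * π / n) ≠ 0 := by
    intro i hi hc
    have := (cos_grid_eq_zero_iff hn (by omega)).mp hc
    rcases ho with ⟨s, hs⟩; omega
  have e1' : Real.cos ((p.1:ℝ) * π / n) * Real.cos ((p.2.1:ℝ) * π / ((n+1:ℕ):ℝ)) =
      Real.cos ((q.1:ℝ) * π / n) * Real.cos ((q.2.1:ℝ) * π / ((n+1:ℕ):ℝ)) := by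
    exact_mod_cast e1
  have e2' : Real.cos ((p.1:ℝ) * π / n) * Real.sin ((p.2.1:ℝ) * π / ((n+1:ℕ):ℝ)) =
      Real.cos ((q.1:ℝ) * π / n) * Real.sin ((q.2.1:ℝ) * π / ((n+1:ℕ):ℝ)) := by
    exact_mod_cast e2
  obtain ⟨hre, hje⟩ := plane_inj (m := n+1) hp2 hq2
    (Or.inl (hrne _ hp1)) (Or.inl (hrne _ hq1)) e1' e2'
  have hi : p.1 = q.1 := cos_grid_inj hn (by omega) (by omega) hre
  have hk : p.2.2 = q.2.2 := cos_grid_inj hn (by omega) (by omega) e3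
  exact Prod.ext hi (Prod.ext hje hk)

private lemma even_card {n t : ℕ} (ht1 : 1 ≤ t) (htn : n = t + t) :
    ((Finset.range (n+1) ×ˢ Finset.range (n+2) ×ˢ Finset.range (n+1)).image
      (fun ijk : ℕ × ℕ × ℕ =>
        (Real.cos (ijk.1 * π / n) * Real.cos (ijk.2.1 * π / (n+2)),
         Real.cos (ijk.1 * π / n) * Real.sin (ijk.2.1 * π / (n+2)),
         Real.cos (ijk.2.2 * π / n)))).card = (n+1)^3 := by
  have hn : 1 ≤ n := by omega
  set f : ℕ × ℕ × ℕ → ℝ × ℝ × ℝ := fun ijk =>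
      (Real.cos (ijk.1 * π / n) * Real.cos (ijk.2.1 * π / (n+2)),
       Real.cos (ijk.1 * π / n) * Real.sin (ijk.2.1 * π / (n+2)),
       Real.cos (ijk.2.2 * π / n)) with hfdef
  set S1 : Finset (ℕ × ℕ × ℕ) :=
      ((Finset.range (n+1)).erase t) ×ˢ (Finset.range (n+2) ×ˢ Finset.range (n+1)) with hS1
  set S2 : Finset (ℕ × ℕ × ℕ) :=
      ({t} : Finset ℕ) ×ˢ (({0} : Finset ℕ) ×ˢ Finset.range (n+1)) with hS2
  have hrt : Real.cos ((t:ℝ) * π / n) = 0 :=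
    (cos_grid_eq_zero_iff hn (by omega)).mpr (by omega)
  have himg : (Finset.range (n+1) ×ˢ Finset.range (n+2) ×ˢ Finset.range (n+1)).image f
      = (S1 ∪ S2).image f := by
    apply Finset.Subset.antisymm
    · intro x hx
      obtain ⟨p, hp, rfl⟩ := Finset.mem_image.mp hx
      simp only [Finset.mem_product, Finset.mem_range] at hp
      by_cases hpt : p.1 = t
      · refine Finset.mem_image.mpr ⟨(t, 0, p.2.2), ?_, ?_⟩
        · apply Finset.mem_union_right
          simpa [hS2] using hp.2.2
        · have hc : Real.cos ((p.1:ℝ) * π / n) = 0 := by rw [hpt]; exact hrt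
          simp only [hfdef, hrt, hc, zero_mul]
      · refine Finset.mem_image.mpr ⟨p, Finset.mem_union_left _ ?_, rfl⟩
        simp only [hS1, Finset.mem_product, Finset.mem_erase, Finset.mem_range]
        exact ⟨⟨hpt, hp.1⟩, hp.2.1, hp.2.2⟩
    · apply Finset.image_subset_image
      intro p hp
      rcases Finset.mem_union.mp hp with h | h
      · simp only [hS1, Finset.mem_product, Finset.mem_erase, Finset.mem_range] at h
        simp only [Finset.mem_product, Finset.mem_range]
        exact ⟨h.1.2, h.2.1, h.2.2⟩
      · simp only [hS2, Finset.mem_product, Finset.mem_singleton, Finset.mem_range] at h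
        simp only [Finset.mem_product, Finset.mem_range]
        refine ⟨by omega, by omega, h.2.2⟩
  have key : ∀ x ∈ S1 ∪ S2, x.1 ≤ n ∧ x.2.1 < n+2 ∧ x.2.2 ≤ n ∧
      (Real.cos ((x.1:ℝ) * π / n) ≠ 0 ∨ x.2.1 = 0) := by
    intro x hx
    rcases Finset.mem_union.mp hx with h | h
    · simp only [hS1, Finset.mem_product, Finset.mem_erase, Finset.mem_range] at h
      refine ⟨by omega, by omega, by omega, Or.inl ?_⟩
      intro hc
      have := (cos_grid_eq_zero_iff hn (by omega)).mp hc
      exact h.1.1 (by omega)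
    · simp only [hS2, Finset.mem_product, Finset.mem_singleton, Finset.mem_range] at h
      exact ⟨by omega, by omega, by omega, Or.inr h.2.1⟩
  have hinj : Set.InjOn f ↑(S1 ∪ S2) := by
    intro p hp q hq hfe
    obtain ⟨hp1, hp2, hp3, hp4⟩ := key p hp
    obtain ⟨hq1, hq2, hq3, hq4⟩ := key q hq
    simp only [hfdef, Prod.mk.injEq] at hfe
    obtain ⟨e1, e2, e3⟩ := hfe
    have e1' : Real.cos ((p.1:ℝ) * π / n) * Real.cos ((p.2.1:ℝ) * π / ((n+2:ℕ):ℝ)) =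
        Real.cos ((q.1:ℝ) * π / n) * Real.cos ((q.2.1:ℝ) * π / ((n+2:ℕ):ℝ)) := by
      exact_mod_cast e1
    have e2' : Real.cos ((p.1:ℝ) * π / n) * Real.sin ((p.2.1:ℝ) * π / ((n+2:ℕ):ℝ)) =
        Real.cos ((q.1:ℝ) * π / n) * Real.sin ((q.2.1:ℝ) * π / ((n+2:ℕ):ℝ)) := by
      exact_mod_cast e2
    obtain ⟨hre, hje⟩ := plane_inj (m := n+2) hp2 hq2 hp4 hq4 e1' e2'
    have hi : p.1 = q.1 := cos_grid_inj hn hp1 hq1 hre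
    have hk : p.2.2 = q.2.2 := cos_grid_inj hn hp3 hq3 e3
    exact Prod.ext hi (Prod.ext hje hk)
  have hdis : Disjoint S1 S2 := by
    rw [Finset.disjoint_left]
    intro p hp1 hp2
    simp only [hS1, Finset.mem_product, Finset.mem_erase, Finset.mem_range] at hp1
    simp only [hS2, Finset.mem_product, Finset.mem_singleton, Finset.mem_range] at hp2
    exact hp1.1.1 hp2.1
  rw [himg, Finset.card_image_of_injOn hinj, Finset.card_union_of_disjoint hdis]
  have hc1 : S1.card = n * ((n+2) * (n+1)) := by
    rw [hS1, Finset.card_product, Finset.card_product, Finset.card_range, Finset.card_range,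
      Finset.card_erase_of_mem (Finset.mem_range.mpr (by omega)), Finset.card_range]
    simp
  have hc2 : S2.card = 1 * (1 * (n+1)) := by
    rw [hS2, Finset.card_product, Finset.card_product, Finset.card_range,
      Finset.card_singleton, Finset.card_singleton]
  rw [hc1, hc2]; ring

/-- For every `n ≥ 1`, the mesh WAM1 of the cylinder has exactly `(n+1)³` distinct
points, both for `n` even and for `n` odd. -/
theorem WAM1_card (n : ℕ) (hn : 1 ≤ n) : (WAM1 n).card = (n + 1) ^ 3 := by
  rcases Nat.even_or_odd n with he | ho
  · obtain ⟨t, ht⟩ := he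
    have hne : Even n := ⟨t, ht⟩
    unfold WAM1
    simp only [hne, if_true]
    exact even_card (t := t) (by omega) (by omega)
  · have hne : ¬ Even n := Nat.not_even_iff_odd.mpr ho
    unfold WAM1
    simp only [hne, if_false]
    exact odd_card hn ho
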